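/- Let (G,T) be a valuated digraph on X, and let C be a tight X-cluster of G with D(=C) ≠ ∅. Then C is an Apresjan X-cluster relative to T; in fact, conditions (T1) and (T2) hold for t = max{T(v) : v ∈ D(=C)}. -/

import Mathlib

open Relation

variable {V : Type*}

/-- `u ⪯ v` : the reflexive–transitive closure of the arc relation `E`. -/
def preceq (E : V → V → Prop) : V → V → Prop := Relation.ReflTransGen E

/-- `u ≺ v` : `u ⪯ v` and `u ≠ v`. -/
def precLT (E : V → V → Prop) (u v : V) : Prop := preceq E u v ∧ u ≠ v

/-- the set of common ancestors of `a` and `b`. -/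
def ca (E : V → V → Prop) (a b : V) : Set V := {v | preceq E v a ∧ preceq E v b}

/-- the set of most recent common ancestors of `a` and `b`:
the maximal elements of `ca E a b` with respect to `⪯`. -/
def mrca (E : V → V → Prop) (a b : V) : Set V :=
  {v | v ∈ ca E a b ∧ ∀ w ∈ ca E a b, preceq E v w → v = w}

/-- the set of descendants of `v` lying in `X`. -/
def desc (E : V → V → Prop) (X : Set V) (v : V) : Set V := {x | x ∈ X ∧ preceq E v x}

/-- `D(=C)` : the vertices whose set of descendants in `X` is exactly `C`. -/
def Deq (E : V → V → Prop) (X C : Set V) : Set V := {v | desc E X v = C}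

/-- `D(⊆C)` : the vertices all of whose descendants in `X` lie in `C`. -/
def Dsub (E : V → V → Prop) (X C : Set V) : Set V := {v | desc E X v ⊆ C}

/-- `S` separates `A` from `B`: every path in the underlying undirected graph of
`E` from an element of `A` to an element of `B` passes through some element of `S`. -/
def Separates (E : V → V → Prop) (S A B : Set V) : Prop :=
  ∀ x ∈ A, ∀ y ∈ B, x ∉ S →
    ¬ Relation.ReflTransGen (fun u v => (E u v ∨ E v u) ∧ v ∉ S) x y

/-- `C` is a tight `X`-cluster: it is a nonempty subset of `X` such that
`D(=C)` separates `C` from `X − C`. -/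
def TightCluster (E : V → V → Prop) (X C : Set V) : Prop :=
  C.Nonempty ∧ C ⊆ X ∧ Separates E (Deq E X C) C (X \ C)

/-- adjacency in the cousinship graph `Γ(C)`. -/
def cousinAdj (E : V → V → Prop) (X C : Set V) (x y : V) : Prop :=
  x ≠ y ∧ x ∈ C ∧ y ∈ C ∧
    ∃ v ∈ Dsub E X C, x ∈ desc E X v ∧ y ∈ desc E X v

/-- `C` is a strict `X`-cluster. -/
def StrictCluster (E : V → V → Prop) (X C : Set V) : Prop :=
  C ⊆ X ∧
  (∀ v : V, (C ∩ desc E X v).Nonempty → C ⊆ desc E X v ∨ desc E X v ⊆ C) ∧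
  (∀ x ∈ C, ∀ y ∈ C, Relation.ReflTransGen (cousinAdj E X C) x y)

/-- the relation `ab‖c`. -/
def relPar (E : V → V → Prop) (a b c : V) : Prop :=
  (ca E a b).Nonempty ∧ ∀ v ∈ mrca E a b,
    (∃ v' ∈ mrca E a c, precLT E v' v) ∧ (∃ v'' ∈ mrca E b c, precLT E v'' v)

/-- the relation `ab|c`. -/
def relBar (E : V → V → Prop) (a b c : V) : Prop :=
  (ca E a b).Nonempty ∧ ∀ v ∈ mrca E a b,
    ∃ v' ∈ mrca E a c ∪ mrca E b c, precLT E v' v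

/-- the relation `ab ⊥ c`. -/
def relPerp (E : V → V → Prop) (a b c : V) : Prop :=
  (ca E a c).Nonempty ∧ (ca E b c).Nonempty ∧
  ∀ v ∈ mrca E a c, ∀ v' ∈ mrca E b c,
    ∃ u ∈ mrca E a b, ∃ u' ∈ mrca E a b, precLT E v u ∧ precLT E v' u'

/-- `C` is an ancestral `X`-cluster. -/
def AncestralCluster (E : V → V → Prop) (X C : Set V) : Prop :=
  C ⊆ X ∧ ∀ x ∈ C, ∀ x' ∈ C, ∀ y ∈ X \ C, relPar E x x' y

/-- `C` is a relaxed ancestral `X`-cluster. -/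
def RelaxedAncestralCluster (E : V → V → Prop) (X C : Set V) : Prop :=
  C ⊆ X ∧ ∀ x ∈ C, ∀ x' ∈ C, ∀ y ∈ X \ C, relBar E x x' y

/-- `C` is a co-ancestral `X`-cluster. -/
def CoAncestralCluster (E : V → V → Prop) (X C : Set V) : Prop :=
  C ⊆ X ∧ ∀ x ∈ C, ∀ x' ∈ C, ∀ y ∈ X \ C, relPerp E x x' y

/-- `C` is an Apresjan `X`-cluster relative to `T`. -/
def ApresjanCluster (E : V → V → Prop) (X : Set V) (T : V → ℝ) (C : Set V) : Prop :=
  C ⊆ X ∧ ∃ t : ℝ,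
    (∀ x ∈ C, ∀ y ∈ C, ∃ v : V, preceq E v x ∧ preceq E v y ∧ t ≤ T v) ∧
    (∀ x ∈ C, ∀ y ∈ X \ C, ∀ v : V, preceq E v x → preceq E v y → T v < t)

/-- `C` is a strong Apresjan `X`-cluster relative to `T`. -/
def StrongApresjanCluster (E : V → V → Prop) (X : Set V) (T : V → ℝ) (C : Set V) : Prop :=
  C ⊆ X ∧ ∃ t : ℝ,
    (∀ x ∈ C, ∀ y ∈ C, ∀ v ∈ mrca E x y, t ≤ T v) ∧
    (∀ x ∈ C, ∀ y ∈ X \ C, ∀ v : V, preceq E v x → preceq E v y → T v < t)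


private lemma aux_up (E : V → V → Prop) (S : Set V) {v x : V} (h : Relation.ReflTransGen E v x) :
    (∃ w ∈ S, Relation.ReflTransGen E v w) ∨
      Relation.ReflTransGen (fun u w => (E u w ∨ E w u) ∧ w ∉ S) x v := by
  induction h with
  | refl => exact Or.inr .refl
  | @tail b c hvb hbc ih =>
    rcases ih with h | p
    · exact Or.inl h
    · by_cases hb : b ∈ S
      · exact Or.inl ⟨b, hb, hvb⟩
      · exact Or.inr (Relation.ReflTransGen.head ⟨Or.inr hbc, hb⟩ p)

private lemma aux_down (E : V → V → Prop) (S : Set V) {v y : V} (h : Relation.ReflTransGen E v y) :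
    (∃ w ∈ S, Relation.ReflTransGen E w y) ∨
      Relation.ReflTransGen (fun u w => (E u w ∨ E w u) ∧ w ∉ S) v y := by
  induction h with
  | refl => exact Or.inr .refl
  | @tail b c hvb hbc ih =>
    rcases ih with ⟨w, hw, hwb⟩ | p
    · exact Or.inl ⟨w, hw, hwb.tail hbc⟩
    · by_cases hc : c ∈ S
      · exact Or.inl ⟨c, hc, .refl⟩
      · exact Or.inr (p.tail ⟨Or.inl hbc, hc⟩)

/-- For a valuated digraph (G,T) on X, a tight X-cluster C of G with
D(=C) ≠ ∅ is an Apresjan X-cluster relative to T; in fact, conditions (T1) and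
(T2) hold for t = max{T(v) : v ∈ D(=C)}. -/
theorem tight_is_apresjan [Fintype V] (E : V → V → Prop) (X : Set V)
    (hacyc : Irreflexive (Relation.TransGen E))
    (T : V → ℝ) (hT : ∀ u v : V, precLT E u v → T u < T v)
    (C : Set V) (hC : TightCluster E X C) (hD : (Deq E X C).Nonempty) :
    ApresjanCluster E X T C ∧
    ∀ t : ℝ, IsGreatest (T '' Deq E X C) t →
      (∀ x ∈ C, ∀ y ∈ C, ∃ v : V, preceq E v x ∧ preceq E v y ∧ t ≤ T v) ∧
      (∀ x ∈ C, ∀ y ∈ X \ C, ∀ v : V, preceq E v x → preceq E v y → T v < t) := by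
  obtain ⟨v0, hv0, hmax⟩ : ∃ a ∈ Deq E X C, ∀ a' ∈ Deq E X C, T a ≤ T a' → T a = T a' := by
    obtain ⟨a, ha, hm⟩ := Set.Finite.exists_maximalFor T (Deq E X C) (Set.toFinite _) hD
    exact ⟨a, ha, fun a' ha' h => le_antisymm h (hm ha' h)⟩
  have hgt : IsGreatest (T '' Deq E X C) (T v0) := by
    refine ⟨⟨v0, hv0, rfl⟩, ?_⟩
    rintro _ ⟨w, hw, rfl⟩
    rcases le_or_gt (T w) (T v0) with h | h
    · exact h
    · exact le_of_eq (hmax w hw h.le).symm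
  have key : ∀ t : ℝ, IsGreatest (T '' Deq E X C) t →
      (∀ x ∈ C, ∀ y ∈ C, ∃ v : V, preceq E v x ∧ preceq E v y ∧ t ≤ T v) ∧
      (∀ x ∈ C, ∀ y ∈ X \ C, ∀ v : V, preceq E v x → preceq E v y → T v < t) := by
    intro t ht
    obtain ⟨v1, hv1, rfl⟩ := ht.1
    constructor
    · intro x hx y hy
      have hdx : x ∈ desc E X v1 := (hv1 : desc E X v1 = C).symm ▸ hx
      have hdy : y ∈ desc E X v1 := (hv1 : desc E X v1 = C).symm ▸ hy
      exact ⟨v1, hdx.2, hdy.2, le_refl _⟩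
    · intro x hx y hy v hvx hvy
      have keyS : ∀ w ∈ Deq E X C, Relation.ReflTransGen E w y → False := by
        intro w hw hwy
        have : y ∈ desc E X w := ⟨hy.1, hwy⟩
        rw [(hw : desc E X w = C)] at this
        exact hy.2 this
      have step : ∀ w ∈ Deq E X C, Relation.ReflTransGen E v w → T v < T v1 := by
        intro w hw hvw
        have hne : v ≠ w := fun h => keyS w hw (h ▸ hvy)
        exact lt_of_lt_of_le (hT v w ⟨hvw, hne⟩) (ht.2 ⟨w, hw, rfl⟩)
      by_cases hxS : x ∈ Deq E X C
      · exact step x hxS hvx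
      · rcases aux_up E (Deq E X C) hvx with ⟨w, hw, hvw⟩ | p1
        · exact step w hw hvw
        · rcases aux_down E (Deq E X C) hvy with ⟨w, hw, hwy⟩ | p2
          · exact (keyS w hw hwy).elim
          · exact ((hC.2.2 x hx y hy hxS) (p1.trans p2)).elim
  exact ⟨⟨hC.2.1, T v0, (key _ hgt).1, (key _ hgt).2⟩, key⟩
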